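/- Let h be analytic on the strip S(-π, 0) = {ζ ∈ ℂ : -π < Im ζ < 0}, continuous on its closure, with θ ↦ h(θ - iλ) in L²(ℝ) for each 0 ≤ λ ≤ π and sup_{0≤λ≤π} ‖h(·-iλ)‖₂ < ∞, and with h(θ-iλ) → 0 uniformly in λ as |θ| → ∞. Then for every θ ∈ ℝ: h(θ - iπ/2) = (2πi)⁻¹ ∫_ℝ [ h(θ' - iπ)/(θ' - θ - iπ/2) - h(θ')/(θ' - θ + iπ/2) ] dθ'. -/

import Mathlib

open MeasureTheory Complex intervalIntegral Set Filter Topology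

/-- L² membership of `x ↦ (x - u)⁻¹` when `u` is off the real axis. -/
lemma aux_memL2_inv (u : ℂ) (hu : u.im ≠ 0) :
    MemLp (fun x : ℝ => ((x : ℂ) - u)⁻¹) 2 (volume : Measure ℝ) := by
  have hne : ∀ x : ℝ, (x : ℂ) - u ≠ 0 := by
    intro x hx
    apply hu
    have := congrArg Complex.im hx
    simpa using this.symm
  have hcont : Continuous fun x : ℝ => ((x : ℂ) - u)⁻¹ :=
    (Complex.continuous_ofReal.sub continuous_const).inv₀ hne
  rw [memLp_two_iff_integrable_sq_norm hcont.aestronglyMeasurable]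
  have key : ∀ x : ℝ, ‖((x : ℂ) - u)⁻¹‖ ^ 2 = ((x - u.re) ^ 2 + u.im ^ 2)⁻¹ := by
    intro x
    rw [norm_inv, inv_pow]
    congr 1
    rw [Complex.sq_norm, Complex.normSq_apply]
    simp [pow_two]
  simp_rw [key]
  set m : ℝ := min (u.im ^ 2) 1 with hm
  have hm0 : 0 < m := lt_min (by positivity) one_pos
  have hint : Integrable (fun x : ℝ => m⁻¹ * (1 + (x - u.re) ^ 2)⁻¹) volume :=
    ((integrable_inv_one_add_sq).comp_sub_right u.re).const_mul _
  refine hint.mono' ?_ ?_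
  · exact (Continuous.aestronglyMeasurable (by
      have : Continuous fun x : ℝ => (x - u.re) ^ 2 + u.im ^ 2 := by continuity
      exact this.inv₀ (fun x => by positivity)))
  · refine Filter.Eventually.of_forall fun x => ?_
    have h1 : m * (1 + (x - u.re) ^ 2) ≤ (x - u.re) ^ 2 + u.im ^ 2 := by
      have h2 : m ≤ u.im ^ 2 := min_le_left _ _
      have h3 : m * (x - u.re) ^ 2 ≤ (x - u.re) ^ 2 := by
        nlinarith [min_le_right (u.im ^ 2) (1:ℝ), sq_nonneg (x - u.re)]
      nlinarith
    have h4 : (0:ℝ) < m * (1 + (x - u.re) ^ 2) := by positivity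
    rw [Real.norm_eq_abs, _root_.abs_of_nonneg (by positivity)]
    rw [← mul_inv]
    exact inv_anti₀ h4 h1

/-- Product of two L² functions is integrable. -/
lemma aux_integrable_mul {f g : ℝ → ℂ} (hf : MemLp f 2 (volume : Measure ℝ))
    (hg : MemLp g 2 (volume : Measure ℝ)) :
    Integrable (fun x => f x * g x) (volume : Measure ℝ) := by
  have h1 : Integrable (fun x => ‖f x‖ ^ 2) volume :=
    (memLp_two_iff_integrable_sq_norm hf.aestronglyMeasurable).mp hf
  have h2 : Integrable (fun x => ‖g x‖ ^ 2) volume :=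
    (memLp_two_iff_integrable_sq_norm hg.aestronglyMeasurable).mp hg
  refine ((h1.add h2).const_mul (1/2 : ℝ)).mono' (hf.aestronglyMeasurable.mul
    hg.aestronglyMeasurable) ?_
  refine Filter.Eventually.of_forall fun x => ?_
  rw [norm_mul]
  show ‖f x‖ * ‖g x‖ ≤ 1/2 * (‖f x‖ ^ 2 + ‖g x‖ ^ 2)
  nlinarith [sq_nonneg (‖f x‖ - ‖g x‖), norm_nonneg (f x), norm_nonneg (g x)]

lemma aux_log_neg_of_im_neg {z : ℂ} (hz : z.im < 0) :
    Complex.log (-z) = Complex.log z + Real.pi * I := by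
  apply Complex.ext
  · simp [Complex.log_re, map_neg_eq_map]
  · simp [Complex.log_im, Complex.arg_neg_eq_arg_add_pi_of_im_neg hz]

lemma aux_log_neg_of_im_pos {z : ℂ} (hz : 0 < z.im) :
    Complex.log (-z) = Complex.log z - Real.pi * I := by
  apply Complex.ext
  · simp [Complex.log_re, map_neg_eq_map]
  · simp [Complex.log_im, Complex.arg_neg_eq_arg_sub_pi_of_im_pos hz]

lemma aux_integral_inv_horiz (a b : ℝ) (c : ℂ)
    (hc : ∀ x ∈ Set.uIcc a b, (x : ℂ) + c ∈ Complex.slitPlane) :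
    ∫ x in a..b, ((x : ℂ) + c)⁻¹ =
      Complex.log ((b : ℂ) + c) - Complex.log ((a : ℂ) + c) := by
  apply intervalIntegral.integral_eq_sub_of_hasDerivAt
  · intro x hx
    have h1 : HasDerivAt (fun x : ℝ => (x : ℂ) + c) 1 x := by
      simpa using (Complex.ofRealCLM.hasDerivAt (x := x)).add_const c
    have h2 := (Complex.hasDerivAt_log (hc x hx)).comp x h1
    simpa [Function.comp_def] using h2
  · apply ContinuousOn.intervalIntegrable
    apply ContinuousOn.inv₀
    · exact (Complex.continuous_ofReal.add continuous_const).continuousOn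
    · exact fun x hx => Complex.slitPlane_ne_zero (hc x hx)

lemma aux_integral_inv_vert_pos (a b : ℝ) (c : ℂ)
    (hc : ∀ y ∈ Set.uIcc a b, c + (y : ℂ) * I ∈ Complex.slitPlane) :
    ∫ y in a..b, (c + (y : ℂ) * I)⁻¹ =
      -I * (Complex.log (c + (b : ℂ) * I) - Complex.log (c + (a : ℂ) * I)) := by
  rw [show -I * (Complex.log (c + (b : ℂ) * I) - Complex.log (c + (a : ℂ) * I))
      = (fun y : ℝ => -I * Complex.log (c + (y : ℂ) * I)) b
        - (fun y : ℝ => -I * Complex.log (c + (y : ℂ) * I)) a by ring]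
  apply intervalIntegral.integral_eq_sub_of_hasDerivAt
  · intro y hy
    have h1 : HasDerivAt (fun y : ℝ => c + (y : ℂ) * I) I y := by
      simpa using ((Complex.ofRealCLM.hasDerivAt (x := y)).mul_const I).const_add c
    have h2 := ((Complex.hasDerivAt_log (hc y hy)).comp y h1).const_mul (-I)
    have h3 : -I * ((c + (y:ℂ)*I)⁻¹ * I) = (c + (y:ℂ)*I)⁻¹ := by
      rw [mul_comm ((c + (y:ℂ)*I)⁻¹)]
      rw [← mul_assoc]
      simp [Complex.I_mul_I]
    rw [h3] at h2
    exact h2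
  · apply ContinuousOn.intervalIntegrable
    apply ContinuousOn.inv₀
    · exact (continuous_const.add (Complex.continuous_ofReal.mul continuous_const)).continuousOn
    · exact fun y hy => Complex.slitPlane_ne_zero (hc y hy)

lemma aux_integral_inv_vert_neg (a b : ℝ) (c : ℂ)
    (hc : ∀ y ∈ Set.uIcc a b, -(c + (y : ℂ) * I) ∈ Complex.slitPlane) :
    ∫ y in a..b, (c + (y : ℂ) * I)⁻¹ =
      -I * (Complex.log (-(c + (b : ℂ) * I)) - Complex.log (-(c + (a : ℂ) * I))) := by
  rw [show -I * (Complex.log (-(c + (b : ℂ) * I)) - Complex.log (-(c + (a : ℂ) * I)))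
      = (fun y : ℝ => -I * Complex.log (-(c + (y : ℂ) * I))) b
        - (fun y : ℝ => -I * Complex.log (-(c + (y : ℂ) * I))) a by ring]
  apply intervalIntegral.integral_eq_sub_of_hasDerivAt
  · intro y hy
    have h1 : HasDerivAt (fun y : ℝ => -(c + (y : ℂ) * I)) (-I) y := by
      have h0 : HasDerivAt (fun y : ℝ => c + (y : ℂ) * I) I y := by
        simpa using ((Complex.ofRealCLM.hasDerivAt (x := y)).mul_const I).const_add c
      exact h0.neg
    have h2 := ((Complex.hasDerivAt_log (hc y hy)).comp y h1).const_mul (-I)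
    have h3 : -I * ((-(c + (y:ℂ)*I))⁻¹ * (-I)) = (c + (y:ℂ)*I)⁻¹ := by
      rw [inv_neg]
      have : (-I) * (-(c + (y:ℂ)*I)⁻¹ * -I) = (I * I) * (-((c + (y:ℂ)*I)⁻¹)) := by ring
      rw [this, Complex.I_mul_I]
      ring
    rw [h3] at h2
    exact h2
  · apply ContinuousOn.intervalIntegrable
    apply ContinuousOn.inv₀
    · exact (continuous_const.add (Complex.continuous_ofReal.mul continuous_const)).continuousOn
    · intro y hy
      have h5 := Complex.slitPlane_ne_zero (hc y hy)
      intro h6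
      exact h5 (by rw [h6, neg_zero])
lemma aux_rect_inv (R : ℝ) (u : ℂ) (hre : |u.re| < R) (him : u.im = -(Real.pi / 2)) :
    (∫ x in (-R)..R, ((x : ℂ) + ((-Real.pi : ℝ) : ℂ) * I - u)⁻¹)
      - (∫ x in (-R)..R, ((x : ℂ) + ((0 : ℝ) : ℂ) * I - u)⁻¹)
      + I * (∫ y in (-Real.pi)..(0 : ℝ), (((R : ℝ) : ℂ) + (y : ℂ) * I - u)⁻¹)
      - I * (∫ y in (-Real.pi)..(0 : ℝ), (((-R : ℝ) : ℂ) + (y : ℂ) * I - u)⁻¹)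
      = 2 * Real.pi * I := by
  have hπ := Real.pi_pos
  have hreL : -R < u.re := (abs_lt.mp hre).1
  have hreR : u.re < R := (abs_lt.mp hre).2
  set A : ℂ := (R : ℂ) - u with hA
  set B : ℂ := ((-R : ℝ) : ℂ) - u with hB
  have hAre : A.re = R - u.re := by simp [hA]
  have hBre : B.re = -R - u.re := by simp [hB]
  have hAim : A.im = Real.pi / 2 := by simp [hA, him]
  have hBim : B.im = Real.pi / 2 := by simp [hB, him]
  -- bottom side
  have hbot : (∫ x in (-R)..R, ((x : ℂ) + ((-Real.pi : ℝ) : ℂ) * I - u)⁻¹)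
      = Complex.log (A - (Real.pi : ℂ) * I) - Complex.log (B - (Real.pi : ℂ) * I) := by
    have e : ∀ x : ℝ, (x : ℂ) + ((-Real.pi : ℝ) : ℂ) * I - u
        = (x : ℂ) + (((-Real.pi : ℝ) : ℂ) * I - u) := fun x => by ring
    simp_rw [e]
    rw [aux_integral_inv_horiz]
    · congr 1 <;> · congr 1; push_cast [hA, hB]; ring
    · intro x hx
      refine Or.inr ?_
      simp [Complex.add_im, Complex.sub_im, Complex.mul_im, him]
      intro hfalse; linarith
  -- top side
  have htop : (∫ x in (-R)..R, ((x : ℂ) + ((0 : ℝ) : ℂ) * I - u)⁻¹)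
      = Complex.log A - Complex.log B := by
    have e : ∀ x : ℝ, (x : ℂ) + ((0 : ℝ) : ℂ) * I - u
        = (x : ℂ) + (((0 : ℝ) : ℂ) * I - u) := fun x => by ring
    simp_rw [e]
    rw [aux_integral_inv_horiz]
    · congr 1 <;> · congr 1; push_cast [hA, hB]; ring
    · intro x hx
      refine Or.inr ?_
      simp [Complex.add_im, Complex.sub_im, Complex.mul_im, him]
  -- right side
  have hright : (∫ y in (-Real.pi)..(0 : ℝ), (((R : ℝ) : ℂ) + (y : ℂ) * I - u)⁻¹)
      = -I * (Complex.log A - Complex.log (A - (Real.pi : ℂ) * I)) := by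
    have e : ∀ y : ℝ, ((R : ℝ) : ℂ) + (y : ℂ) * I - u = A + (y : ℂ) * I := fun y => by
      rw [hA]; ring
    simp_rw [e]
    rw [aux_integral_inv_vert_pos]
    · congr 1
      congr 1 <;> · congr 1; push_cast; ring
    · intro y hy
      refine Or.inl ?_
      rw [Set.uIcc_of_le (by linarith)] at hy
      simp [Complex.add_re, hAre, Complex.mul_re]
      linarith
  -- left side
  have hleft : (∫ y in (-Real.pi)..(0 : ℝ), (((-R : ℝ) : ℂ) + (y : ℂ) * I - u)⁻¹)
      = -I * (Complex.log (-B) - Complex.log (-(B - (Real.pi : ℂ) * I))) := by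
    have e : ∀ y : ℝ, ((-R : ℝ) : ℂ) + (y : ℂ) * I - u = B + (y : ℂ) * I := fun y => by
      rw [hB]; ring
    simp_rw [e]
    rw [aux_integral_inv_vert_neg]
    · congr 1
      congr 1 <;> · congr 1; push_cast; ring
    · intro y hy
      refine Or.inl ?_
      rw [Set.uIcc_of_le (by linarith)] at hy
      simp [Complex.neg_re, Complex.add_re, hBre, Complex.mul_re]
      linarith
  rw [hbot, htop, hright, hleft]
  have key : ∀ X : ℂ, I * (-I * X) = X := fun X => by
    rw [show I * (-I * X) = -(I * I) * X by ring, Complex.I_mul_I]; ring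
  rw [key, key]
  have j1 : Complex.log (-(B - (Real.pi : ℂ) * I))
      = Complex.log (B - (Real.pi : ℂ) * I) + Real.pi * I := by
    apply aux_log_neg_of_im_neg
    simp [Complex.sub_im, hBim]
    linarith
  have j2 : Complex.log (-B) = Complex.log B - Real.pi * I := by
    apply aux_log_neg_of_im_pos
    rw [hBim]; linarith
  rw [j1, j2]
  ring
lemma aux_keyA (h : ℂ → ℂ)
    (hanal : DifferentiableOn ℂ h {ζ : ℂ | -Real.pi < ζ.im ∧ ζ.im < 0})
    (hcont : ContinuousOn h {ζ : ℂ | -Real.pi ≤ ζ.im ∧ ζ.im ≤ 0})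
    (u : ℂ) (R : ℝ) (hre : |u.re| < R) (him : u.im = -(Real.pi / 2)) :
    (∫ x in (-R)..R, ((x : ℂ) + ((-Real.pi : ℝ) : ℂ) * I - u)⁻¹ * h ((x : ℂ) + ((-Real.pi : ℝ) : ℂ) * I))
      - (∫ x in (-R)..R, ((x : ℂ) + ((0 : ℝ) : ℂ) * I - u)⁻¹ * h ((x : ℂ) + ((0 : ℝ) : ℂ) * I))
      + I * (∫ y in (-Real.pi)..(0 : ℝ), (((R : ℝ) : ℂ) + (y : ℂ) * I - u)⁻¹ * h (((R : ℝ) : ℂ) + (y : ℂ) * I))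
      - I * (∫ y in (-Real.pi)..(0 : ℝ), (((-R : ℝ) : ℂ) + (y : ℂ) * I - u)⁻¹ * h (((-R : ℝ) : ℂ) + (y : ℂ) * I))
      = 2 * Real.pi * I * h u := by
  have hπ := Real.pi_pos
  have hreL : -R < u.re := (abs_lt.mp hre).1
  have hreR : u.re < R := (abs_lt.mp hre).2
  have hR0 : (0:ℝ) < R := lt_of_le_of_lt (abs_nonneg _) hre
  set Sop : Set ℂ := {ζ : ℂ | -Real.pi < ζ.im ∧ ζ.im < 0} with hSop
  set Scl : Set ℂ := {ζ : ℂ | -Real.pi ≤ ζ.im ∧ ζ.im ≤ 0} with hScl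
  have hSopOpen : IsOpen Sop :=
    (isOpen_lt continuous_const Complex.continuous_im).inter
      (isOpen_lt Complex.continuous_im continuous_const)
  have humem : u ∈ Sop := by
    constructor <;> (rw [him]) <;> linarith
  set g : ℂ → ℂ := dslope h u with hg
  -- continuity of g on the closed strip
  have hgcont : ContinuousOn g Scl := by
    intro b hb
    by_cases hbu : b = u
    · subst hbu
      exact ((continuousAt_dslope_same.2
        (hanal.differentiableAt (hSopOpen.mem_nhds humem))).continuousWithinAt)
    · have hF : ContinuousWithinAt (fun ζ : ℂ => (h ζ - h u) / (ζ - u)) Scl b := by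
        refine ContinuousWithinAt.div ((hcont b hb).sub continuousWithinAt_const)
          ((continuousWithinAt_id).sub continuousWithinAt_const) (sub_ne_zero.2 hbu)
      refine hF.congr_of_eventuallyEq ?_ ?_
      · have hmem : {u}ᶜ ∈ nhdsWithin b Scl :=
          mem_nhdsWithin_of_mem_nhds (isOpen_compl_singleton.mem_nhds hbu)
        filter_upwards [hmem] with ζ hζ
        rw [hg, dslope_of_ne _ hζ, slope_def_field]
      · rw [hg, dslope_of_ne _ hbu, slope_def_field]
  -- differentiability of g on the open strip
  have hgdiff : DifferentiableOn ℂ g Sop :=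
    (Complex.differentiableOn_dslope (hSopOpen.mem_nhds humem)).mpr hanal
  -- apply Cauchy-Goursat on the rectangle
  set z : ℂ := ((-R : ℝ) : ℂ) + ((-Real.pi : ℝ) : ℂ) * I with hz
  set w : ℂ := ((R : ℝ) : ℂ) + ((0 : ℝ) : ℂ) * I with hw
  have hzre : z.re = -R := by simp [hz]
  have hzim : z.im = -Real.pi := by simp [hz]
  have hwre : w.re = R := by simp [hw]
  have hwim : w.im = 0 := by simp [hw]
  have HB := Complex.integral_boundary_rect_eq_zero_of_continuousOn_of_differentiableOn g z w
    ?_ ?_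
  rotate_left
  · -- continuity on the closed rectangle
    refine hgcont.mono ?_
    intro ζ hζ
    rw [Complex.mem_reProdIm] at hζ
    rw [hzim, hwim] at hζ
    rcases hζ with ⟨_, h2⟩
    rw [Set.uIcc_of_le (by linarith)] at h2
    exact ⟨h2.1, h2.2⟩
  · -- differentiability on the open rectangle
    refine hgdiff.mono ?_
    intro ζ hζ
    rw [Complex.mem_reProdIm] at hζ
    rw [hzim, hwim] at hζ
    rcases hζ with ⟨_, h2⟩
    rw [min_eq_left (by linarith), max_eq_right (by linarith : -Real.pi ≤ (0:ℝ))] at h2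
    exact ⟨h2.1, h2.2⟩
  rw [hzre, hzim, hwre, hwim] at HB
  simp only [smul_eq_mul] at HB
  -- pointwise identity for g on each boundary segment
  have hgeq : ∀ ζ : ℂ, ζ - u ≠ 0 →
      g ζ = (ζ - u)⁻¹ * h ζ - h u * (ζ - u)⁻¹ := by
    intro ζ hζ
    have hne : ζ ≠ u := fun e => hζ (by rw [e, sub_self])
    rw [hg, dslope_of_ne _ hne, slope_def_field]
    field_simp
  -- nonvanishing of the denominators on the four sides
  have hne_bot : ∀ x : ℝ, (x : ℂ) + ((-Real.pi : ℝ) : ℂ) * I - u ≠ 0 := by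
    intro x hx
    have h1 := congrArg Complex.im hx
    simp [him] at h1
    linarith
  have hne_top : ∀ x : ℝ, (x : ℂ) + ((0 : ℝ) : ℂ) * I - u ≠ 0 := by
    intro x hx
    have h1 := congrArg Complex.im hx
    simp [him] at h1
  have hne_right : ∀ y : ℝ, ((R : ℝ) : ℂ) + (y : ℂ) * I - u ≠ 0 := by
    intro y hy
    have h1 := congrArg Complex.re hy
    simp at h1
    linarith
  have hne_left : ∀ y : ℝ, ((-R : ℝ) : ℂ) + (y : ℂ) * I - u ≠ 0 := by
    intro y hy
    have h1 := congrArg Complex.re hy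
    simp at h1
    linarith
  -- continuity of the various integrands
  have contq_bot : Continuous fun x : ℝ => ((x : ℂ) + ((-Real.pi : ℝ) : ℂ) * I - u)⁻¹ :=
    ((Complex.continuous_ofReal.add continuous_const).sub continuous_const).inv₀ hne_bot
  have contq_top : Continuous fun x : ℝ => ((x : ℂ) + ((0 : ℝ) : ℂ) * I - u)⁻¹ :=
    ((Complex.continuous_ofReal.add continuous_const).sub continuous_const).inv₀ hne_top
  have contq_right : Continuous fun y : ℝ => (((R : ℝ) : ℂ) + (y : ℂ) * I - u)⁻¹ :=
    ((continuous_const.add (Complex.continuous_ofReal.mul continuous_const)).sub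
      continuous_const).inv₀ hne_right
  have contq_left : Continuous fun y : ℝ => (((-R : ℝ) : ℂ) + (y : ℂ) * I - u)⁻¹ :=
    ((continuous_const.add (Complex.continuous_ofReal.mul continuous_const)).sub
      continuous_const).inv₀ hne_left
  have conth_bot : Continuous fun x : ℝ => h ((x : ℂ) + ((-Real.pi : ℝ) : ℂ) * I) := by
    refine hcont.comp_continuous (Complex.continuous_ofReal.add continuous_const) fun x => ?_
    constructor <;> simp <;> linarith
  have conth_top : Continuous fun x : ℝ => h ((x : ℂ) + ((0 : ℝ) : ℂ) * I) := by
    refine hcont.comp_continuous (Complex.continuous_ofReal.add continuous_const) fun x => ?_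
    constructor <;> simp <;> linarith
  have hmapsV : ∀ c : ℝ, Set.MapsTo (fun y : ℝ => ((c : ℝ) : ℂ) + (y : ℂ) * I)
      (Set.uIcc (-Real.pi) (0 : ℝ)) Scl := by
    intro c y hy
    rw [Set.uIcc_of_le (by linarith)] at hy
    constructor <;> simp <;> [exact hy.1; exact hy.2]
  have conth_right : ContinuousOn (fun y : ℝ => h (((R : ℝ) : ℂ) + (y : ℂ) * I))
      (Set.uIcc (-Real.pi) (0 : ℝ)) :=
    hcont.comp (continuous_const.add
      (Complex.continuous_ofReal.mul continuous_const)).continuousOn (hmapsV R)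
  have conth_left : ContinuousOn (fun y : ℝ => h (((-R : ℝ) : ℂ) + (y : ℂ) * I))
      (Set.uIcc (-Real.pi) (0 : ℝ)) :=
    hcont.comp (continuous_const.add
      (Complex.continuous_ofReal.mul continuous_const)).continuousOn (hmapsV (-R))
  -- interval integrability
  have int_f_bot : IntervalIntegrable
      (fun x : ℝ => ((x : ℂ) + ((-Real.pi : ℝ) : ℂ) * I - u)⁻¹ * h ((x : ℂ) + ((-Real.pi : ℝ) : ℂ) * I))
      volume (-R) R := (contq_bot.mul conth_bot).intervalIntegrable _ _
  have int_q_bot : IntervalIntegrable (fun x : ℝ => h u * ((x : ℂ) + ((-Real.pi : ℝ) : ℂ) * I - u)⁻¹)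
      volume (-R) R := (continuous_const.mul contq_bot).intervalIntegrable _ _
  have int_f_top : IntervalIntegrable
      (fun x : ℝ => ((x : ℂ) + ((0 : ℝ) : ℂ) * I - u)⁻¹ * h ((x : ℂ) + ((0 : ℝ) : ℂ) * I))
      volume (-R) R := (contq_top.mul conth_top).intervalIntegrable _ _
  have int_q_top : IntervalIntegrable (fun x : ℝ => h u * ((x : ℂ) + ((0 : ℝ) : ℂ) * I - u)⁻¹)
      volume (-R) R := (continuous_const.mul contq_top).intervalIntegrable _ _
  have int_f_right : IntervalIntegrable
      (fun y : ℝ => (((R : ℝ) : ℂ) + (y : ℂ) * I - u)⁻¹ * h (((R : ℝ) : ℂ) + (y : ℂ) * I))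
      volume (-Real.pi) 0 :=
    ((contq_right.continuousOn.mul conth_right)).intervalIntegrable
  have int_q_right : IntervalIntegrable (fun y : ℝ => h u * (((R : ℝ) : ℂ) + (y : ℂ) * I - u)⁻¹)
      volume (-Real.pi) 0 := (continuous_const.mul contq_right).intervalIntegrable _ _
  have int_f_left : IntervalIntegrable
      (fun y : ℝ => (((-R : ℝ) : ℂ) + (y : ℂ) * I - u)⁻¹ * h (((-R : ℝ) : ℂ) + (y : ℂ) * I))
      volume (-Real.pi) 0 :=
    ((contq_left.continuousOn.mul conth_left)).intervalIntegrable
  have int_q_left : IntervalIntegrable (fun y : ℝ => h u * (((-R : ℝ) : ℂ) + (y : ℂ) * I - u)⁻¹)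
      volume (-Real.pi) 0 := (continuous_const.mul contq_left).intervalIntegrable _ _
  -- split each boundary integral
  have hsplit_bot : (∫ x in (-R)..R, g ((x : ℂ) + ((-Real.pi : ℝ) : ℂ) * I))
      = (∫ x in (-R)..R, ((x : ℂ) + ((-Real.pi : ℝ) : ℂ) * I - u)⁻¹ * h ((x : ℂ) + ((-Real.pi : ℝ) : ℂ) * I))
        - h u * ∫ x in (-R)..R, ((x : ℂ) + ((-Real.pi : ℝ) : ℂ) * I - u)⁻¹ := by
    rw [← intervalIntegral.integral_const_mul, ← intervalIntegral.integral_sub int_f_bot int_q_bot]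
    exact intervalIntegral.integral_congr fun x _ => hgeq _ (hne_bot x)
  have hsplit_top : (∫ x in (-R)..R, g ((x : ℂ) + ((0 : ℝ) : ℂ) * I))
      = (∫ x in (-R)..R, ((x : ℂ) + ((0 : ℝ) : ℂ) * I - u)⁻¹ * h ((x : ℂ) + ((0 : ℝ) : ℂ) * I))
        - h u * ∫ x in (-R)..R, ((x : ℂ) + ((0 : ℝ) : ℂ) * I - u)⁻¹ := by
    rw [← intervalIntegral.integral_const_mul, ← intervalIntegral.integral_sub int_f_top int_q_top]
    exact intervalIntegral.integral_congr fun x _ => hgeq _ (hne_top x)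
  have hsplit_right : (∫ y in (-Real.pi)..(0 : ℝ), g (((R : ℝ) : ℂ) + (y : ℂ) * I))
      = (∫ y in (-Real.pi)..(0 : ℝ), (((R : ℝ) : ℂ) + (y : ℂ) * I - u)⁻¹ * h (((R : ℝ) : ℂ) + (y : ℂ) * I))
        - h u * ∫ y in (-Real.pi)..(0 : ℝ), (((R : ℝ) : ℂ) + (y : ℂ) * I - u)⁻¹ := by
    rw [← intervalIntegral.integral_const_mul,
      ← intervalIntegral.integral_sub int_f_right int_q_right]
    exact intervalIntegral.integral_congr fun y _ => hgeq _ (hne_right y)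
  have hsplit_left : (∫ y in (-Real.pi)..(0 : ℝ), g (((-R : ℝ) : ℂ) + (y : ℂ) * I))
      = (∫ y in (-Real.pi)..(0 : ℝ), (((-R : ℝ) : ℂ) + (y : ℂ) * I - u)⁻¹ * h (((-R : ℝ) : ℂ) + (y : ℂ) * I))
        - h u * ∫ y in (-Real.pi)..(0 : ℝ), (((-R : ℝ) : ℂ) + (y : ℂ) * I - u)⁻¹ := by
    rw [← intervalIntegral.integral_const_mul,
      ← intervalIntegral.integral_sub int_f_left int_q_left]
    exact intervalIntegral.integral_congr fun y _ => hgeq _ (hne_left y)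
  rw [hsplit_bot, hsplit_top, hsplit_right, hsplit_left] at HB
  have hrect := aux_rect_inv R u hre him
  linear_combination HB + h u * hrect

/-- Cauchy integral representation on the middle line of the strip
`S(-π,0)` for an analytic function with uniformly `L²`-bounded horizontal
slices decaying at infinity: the value `h(θ - iπ/2)` is recovered from the
boundary values on `Im ζ = 0` and `Im ζ = -π`. -/
theorem stmt12 (h : ℂ → ℂ)
    (hanal : DifferentiableOn ℂ h {ζ : ℂ | -Real.pi < ζ.im ∧ ζ.im < 0})
    (hcont : ContinuousOn h {ζ : ℂ | -Real.pi ≤ ζ.im ∧ ζ.im ≤ 0})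
    (hL2 : ∀ lam ∈ Set.Icc (0 : ℝ) Real.pi,
      MemLp (fun θ : ℝ => h ((θ : ℂ) - (lam : ℂ) * Complex.I)) 2 (volume : Measure ℝ))
    (hbd : ∃ M : ℝ, ∀ lam ∈ Set.Icc (0 : ℝ) Real.pi,
      eLpNorm (fun θ : ℝ => h ((θ : ℂ) - (lam : ℂ) * Complex.I)) 2 (volume : Measure ℝ)
        ≤ ENNReal.ofReal M)
    (hdecay : ∀ ε : ℝ, 0 < ε → ∃ T : ℝ, ∀ (θ lam : ℝ), T ≤ |θ| →
      lam ∈ Set.Icc (0 : ℝ) Real.pi →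
      ‖h ((θ : ℂ) - (lam : ℂ) * Complex.I)‖ ≤ ε) :
    ∀ θ : ℝ,
      h ((θ : ℂ) - ((Real.pi : ℂ) / 2) * Complex.I)
        = (2 * (Real.pi : ℂ) * Complex.I)⁻¹ *
          ∫ θ' : ℝ,
            (h ((θ' : ℂ) - (Real.pi : ℂ) * Complex.I) /
                ((θ' : ℂ) - (θ : ℂ) - ((Real.pi : ℂ) / 2) * Complex.I) -
              h (θ' : ℂ) / ((θ' : ℂ) - (θ : ℂ) + ((Real.pi : ℂ) / 2) * Complex.I)) := by
  intro θ
  have hπ := Real.pi_pos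
  set u : ℂ := (θ : ℂ) - ((Real.pi : ℂ) / 2) * Complex.I with hu
  have hure : u.re = θ := by simp [hu]
  have huim : u.im = -(Real.pi / 2) := by
    rw [hu]
    simp
  -- L² membership of the boundary slices
  have hmem_bot : MemLp (fun x : ℝ => h ((x : ℂ) + ((-Real.pi : ℝ) : ℂ) * I)) 2
      (volume : Measure ℝ) := by
    have e : (fun x : ℝ => h ((x : ℂ) + ((-Real.pi : ℝ) : ℂ) * I))
        = fun x : ℝ => h ((x : ℂ) - ((Real.pi : ℝ) : ℂ) * I) := by
      funext x; congr 1; push_cast; ring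
    rw [e]
    exact hL2 Real.pi ⟨le_of_lt hπ, le_refl _⟩
  have hmem_top : MemLp (fun x : ℝ => h ((x : ℂ) + ((0 : ℝ) : ℂ) * I)) 2
      (volume : Measure ℝ) := by
    have e : (fun x : ℝ => h ((x : ℂ) + ((0 : ℝ) : ℂ) * I))
        = fun x : ℝ => h ((x : ℂ) - ((0 : ℝ) : ℂ) * I) := by
      funext x; congr 1; push_cast; ring
    rw [e]
    exact hL2 0 ⟨le_refl _, le_of_lt hπ⟩
  -- L² membership of the Cauchy kernels
  have hq_bot : MemLp (fun x : ℝ => ((x : ℂ) + ((-Real.pi : ℝ) : ℂ) * I - u)⁻¹) 2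
      (volume : Measure ℝ) := by
    have e : (fun x : ℝ => ((x : ℂ) + ((-Real.pi : ℝ) : ℂ) * I - u)⁻¹)
        = fun x : ℝ => ((x : ℂ) - (u + (Real.pi : ℂ) * I))⁻¹ := by
      funext x; congr 1; push_cast; ring
    rw [e]
    refine aux_memL2_inv _ ?_
    have : (u + (Real.pi : ℂ) * I).im = Real.pi / 2 := by
      simp [Complex.add_im, huim]; ring
    rw [this]; positivity
  have hq_top : MemLp (fun x : ℝ => ((x : ℂ) + ((0 : ℝ) : ℂ) * I - u)⁻¹) 2
      (volume : Measure ℝ) := by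
    have e : (fun x : ℝ => ((x : ℂ) + ((0 : ℝ) : ℂ) * I - u)⁻¹)
        = fun x : ℝ => ((x : ℂ) - u)⁻¹ := by
      funext x; congr 1; push_cast; ring
    rw [e]
    refine aux_memL2_inv _ ?_
    rw [huim]
    intro hc; rw [neg_eq_zero, div_eq_zero_iff] at hc
    rcases hc with hc | hc
    · exact hπ.ne' hc
    · norm_num at hc
  -- integrability of the two horizontal boundary integrands
  have hGb_int : Integrable (fun x : ℝ =>
      ((x : ℂ) + ((-Real.pi : ℝ) : ℂ) * I - u)⁻¹ * h ((x : ℂ) + ((-Real.pi : ℝ) : ℂ) * I))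
      (volume : Measure ℝ) := aux_integrable_mul hq_bot hmem_bot
  have hGt_int : Integrable (fun x : ℝ =>
      ((x : ℂ) + ((0 : ℝ) : ℂ) * I - u)⁻¹ * h ((x : ℂ) + ((0 : ℝ) : ℂ) * I))
      (volume : Measure ℝ) := aux_integrable_mul hq_top hmem_top
  -- limits of the horizontal integrals
  have tb : Tendsto (fun R : ℝ => ∫ x in (-R)..R,
      ((x : ℂ) + ((-Real.pi : ℝ) : ℂ) * I - u)⁻¹ * h ((x : ℂ) + ((-Real.pi : ℝ) : ℂ) * I)) atTop
      (𝓝 (∫ x : ℝ, ((x : ℂ) + ((-Real.pi : ℝ) : ℂ) * I - u)⁻¹ * h ((x : ℂ) + ((-Real.pi : ℝ) : ℂ) * I))) :=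
    MeasureTheory.intervalIntegral_tendsto_integral hGb_int tendsto_neg_atTop_atBot tendsto_id
  have tt' : Tendsto (fun R : ℝ => ∫ x in (-R)..R,
      ((x : ℂ) + ((0 : ℝ) : ℂ) * I - u)⁻¹ * h ((x : ℂ) + ((0 : ℝ) : ℂ) * I)) atTop
      (𝓝 (∫ x : ℝ, ((x : ℂ) + ((0 : ℝ) : ℂ) * I - u)⁻¹ * h ((x : ℂ) + ((0 : ℝ) : ℂ) * I))) :=
    MeasureTheory.intervalIntegral_tendsto_integral hGt_int tendsto_neg_atTop_atBot tendsto_id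
  -- vertical integrals tend to zero
  have tvert : ∀ σ : ℝ → ℝ, (∀ R, σ R = R ∨ σ R = -R) →
      Tendsto (fun R : ℝ => ∫ y in (-Real.pi)..(0 : ℝ),
        (((σ R : ℝ) : ℂ) + (y : ℂ) * I - u)⁻¹ * h (((σ R : ℝ) : ℂ) + (y : ℂ) * I)) atTop (𝓝 0) := by
    intro σ hσ
    rw [NormedAddCommGroup.tendsto_nhds_zero]
    intro ε hε
    have hε' : 0 < ε / (Real.pi + 1) := by positivity
    obtain ⟨T, hT⟩ := hdecay _ hε'
    filter_upwards [eventually_ge_atTop (max T (|θ| + 1))] with R hR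
    have hRT : T ≤ R := le_trans (le_max_left _ _) hR
    have hRθ : |θ| + 1 ≤ R := le_trans (le_max_right _ _) hR
    have hR0 : 0 < R := by
      have := abs_nonneg θ; linarith
    have habsσ : |σ R| = R := by
      rcases hσ R with hc | hc <;> rw [hc]
      · exact abs_of_pos hR0
      · rw [abs_neg]; exact abs_of_pos hR0
    have hbound : ∀ y ∈ Set.uIoc (-Real.pi) (0 : ℝ),
        ‖(((σ R : ℝ) : ℂ) + (y : ℂ) * I - u)⁻¹ * h (((σ R : ℝ) : ℂ) + (y : ℂ) * I)‖
          ≤ ε / (Real.pi + 1) := by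
      intro y hy
      rw [Set.uIoc_of_le (by linarith)] at hy
      have h1 : ‖(((σ R : ℝ) : ℂ) + (y : ℂ) * I - u)⁻¹‖ ≤ 1 := by
        rw [norm_inv]
        have h4 : (((σ R : ℝ) : ℂ) + (y : ℂ) * I - u).re = σ R - θ := by simp [hure]
        have h3 := Complex.abs_re_le_norm (((σ R : ℝ) : ℂ) + (y : ℂ) * I - u)
        rw [h4] at h3
        have h5 : (1 : ℝ) ≤ |σ R - θ| := by
          have h6 := abs_sub_abs_le_abs_sub (σ R) θ
          rw [habsσ] at h6
          linarith
        have h2 : (1 : ℝ) ≤ ‖((σ R : ℝ) : ℂ) + (y : ℂ) * I - u‖ := by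
          linarith
        rw [inv_le_one_iff₀]
        right; exact h2
      have h5 : ‖h (((σ R : ℝ) : ℂ) + (y : ℂ) * I)‖ ≤ ε / (Real.pi + 1) := by
        have h6 := hT (σ R) (-y) (by rw [habsσ]; exact hRT)
          ⟨by linarith [hy.2], by linarith [hy.1.le]⟩
        have e : ((σ R : ℝ) : ℂ) - ((-y : ℝ) : ℂ) * I = ((σ R : ℝ) : ℂ) + (y : ℂ) * I := by
          push_cast; ring
        rw [e] at h6
        exact h6
      calc ‖(((σ R : ℝ) : ℂ) + (y : ℂ) * I - u)⁻¹ * h (((σ R : ℝ) : ℂ) + (y : ℂ) * I)‖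
          = ‖(((σ R : ℝ) : ℂ) + (y : ℂ) * I - u)⁻¹‖ * ‖h (((σ R : ℝ) : ℂ) + (y : ℂ) * I)‖ :=
            norm_mul _ _
        _ ≤ 1 * (ε / (Real.pi + 1)) :=
            mul_le_mul h1 h5 (norm_nonneg _) zero_le_one
        _ = ε / (Real.pi + 1) := one_mul _
    have hb2 := intervalIntegral.norm_integral_le_of_norm_le_const hbound
    have habs : |(0 : ℝ) - (-Real.pi)| = Real.pi := by
      rw [sub_neg_eq_add, zero_add, abs_of_pos hπ]
    rw [habs] at hb2
    have hlast : ε / (Real.pi + 1) * Real.pi < ε := by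
      rw [div_mul_eq_mul_div, div_lt_iff₀ (by linarith)]
      nlinarith
    exact lt_of_le_of_lt hb2 hlast
  have tr := tvert (fun R => R) (fun R => Or.inl rfl)
  have tl := tvert (fun R => -R) (fun R => Or.inr rfl)
  -- the combination tends to the difference of full-line integrals
  have tmain : Tendsto (fun R : ℝ =>
      (∫ x in (-R)..R, ((x : ℂ) + ((-Real.pi : ℝ) : ℂ) * I - u)⁻¹ * h ((x : ℂ) + ((-Real.pi : ℝ) : ℂ) * I))
      - (∫ x in (-R)..R, ((x : ℂ) + ((0 : ℝ) : ℂ) * I - u)⁻¹ * h ((x : ℂ) + ((0 : ℝ) : ℂ) * I))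
      + I * (∫ y in (-Real.pi)..(0 : ℝ), (((R : ℝ) : ℂ) + (y : ℂ) * I - u)⁻¹ * h (((R : ℝ) : ℂ) + (y : ℂ) * I))
      - I * (∫ y in (-Real.pi)..(0 : ℝ), (((-R : ℝ) : ℂ) + (y : ℂ) * I - u)⁻¹ * h (((-R : ℝ) : ℂ) + (y : ℂ) * I)))
      atTop
      (𝓝 ((∫ x : ℝ, ((x : ℂ) + ((-Real.pi : ℝ) : ℂ) * I - u)⁻¹ * h ((x : ℂ) + ((-Real.pi : ℝ) : ℂ) * I))
        - (∫ x : ℝ, ((x : ℂ) + ((0 : ℝ) : ℂ) * I - u)⁻¹ * h ((x : ℂ) + ((0 : ℝ) : ℂ) * I))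
        + I * 0 - I * 0)) :=
    ((tb.sub tt').add (tr.const_mul I)).sub (tl.const_mul I)
  have keyAll : (fun R : ℝ =>
      (∫ x in (-R)..R, ((x : ℂ) + ((-Real.pi : ℝ) : ℂ) * I - u)⁻¹ * h ((x : ℂ) + ((-Real.pi : ℝ) : ℂ) * I))
      - (∫ x in (-R)..R, ((x : ℂ) + ((0 : ℝ) : ℂ) * I - u)⁻¹ * h ((x : ℂ) + ((0 : ℝ) : ℂ) * I))
      + I * (∫ y in (-Real.pi)..(0 : ℝ), (((R : ℝ) : ℂ) + (y : ℂ) * I - u)⁻¹ * h (((R : ℝ) : ℂ) + (y : ℂ) * I))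
      - I * (∫ y in (-Real.pi)..(0 : ℝ), (((-R : ℝ) : ℂ) + (y : ℂ) * I - u)⁻¹ * h (((-R : ℝ) : ℂ) + (y : ℂ) * I)))
      =ᶠ[atTop] fun _ => 2 * Real.pi * I * h u := by
    filter_upwards [eventually_ge_atTop (|θ| + 1)] with R hR
    exact aux_keyA h hanal hcont u R (by rw [hure]; linarith) huim
  have hval : 2 * Real.pi * I * h u
      = (∫ x : ℝ, ((x : ℂ) + ((-Real.pi : ℝ) : ℂ) * I - u)⁻¹ * h ((x : ℂ) + ((-Real.pi : ℝ) : ℂ) * I))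
        - (∫ x : ℝ, ((x : ℂ) + ((0 : ℝ) : ℂ) * I - u)⁻¹ * h ((x : ℂ) + ((0 : ℝ) : ℂ) * I))
        + I * 0 - I * 0 :=
    tendsto_nhds_unique tendsto_const_nhds ((tendsto_congr' keyAll).mp tmain)
  rw [mul_zero, add_zero, sub_zero] at hval
  -- rewrite the goal integral
  have e1 : (fun x : ℝ => h ((x : ℂ) - (Real.pi : ℂ) * I) /
        ((x : ℂ) - (θ : ℂ) - ((Real.pi : ℂ) / 2) * I))
      = fun x : ℝ => ((x : ℂ) + ((-Real.pi : ℝ) : ℂ) * I - u)⁻¹ * h ((x : ℂ) + ((-Real.pi : ℝ) : ℂ) * I) := by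
    funext x
    rw [div_eq_mul_inv, mul_comm]
    congr 2
    · rw [hu]; push_cast; ring
    · push_cast; ring
  have e2 : (fun x : ℝ => h ((x : ℂ)) /
        ((x : ℂ) - (θ : ℂ) + ((Real.pi : ℂ) / 2) * I))
      = fun x : ℝ => ((x : ℂ) + ((0 : ℝ) : ℂ) * I - u)⁻¹ * h ((x : ℂ) + ((0 : ℝ) : ℂ) * I) := by
    funext x
    rw [div_eq_mul_inv, mul_comm]
    congr 2
    · rw [hu]; push_cast; ring
    · push_cast; ring
  have hsplit : (∫ x : ℝ,
      (h ((x : ℂ) - (Real.pi : ℂ) * I) / ((x : ℂ) - (θ : ℂ) - ((Real.pi : ℂ) / 2) * I)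
        - h ((x : ℂ)) / ((x : ℂ) - (θ : ℂ) + ((Real.pi : ℂ) / 2) * I)))
      = (∫ x : ℝ, ((x : ℂ) + ((-Real.pi : ℝ) : ℂ) * I - u)⁻¹ * h ((x : ℂ) + ((-Real.pi : ℝ) : ℂ) * I))
        - (∫ x : ℝ, ((x : ℂ) + ((0 : ℝ) : ℂ) * I - u)⁻¹ * h ((x : ℂ) + ((0 : ℝ) : ℂ) * I)) := by
    rw [← MeasureTheory.integral_sub (e1 ▸ hGb_int) (e2 ▸ hGt_int)]
    congr 1
    funext x
    rw [show h ((x : ℂ) - (Real.pi : ℂ) * I) / ((x : ℂ) - (θ : ℂ) - ((Real.pi : ℂ) / 2) * I)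
        = ((x : ℂ) + ((-Real.pi : ℝ) : ℂ) * I - u)⁻¹ * h ((x : ℂ) + ((-Real.pi : ℝ) : ℂ) * I)
      from congrFun e1 x,
      show h ((x : ℂ)) / ((x : ℂ) - (θ : ℂ) + ((Real.pi : ℂ) / 2) * I)
        = ((x : ℂ) + ((0 : ℝ) : ℂ) * I - u)⁻¹ * h ((x : ℂ) + ((0 : ℝ) : ℂ) * I)
      from congrFun e2 x]
  rw [hsplit, ← hval]
  rw [← mul_assoc, inv_mul_cancel₀ Complex.two_pi_I_ne_zero, one_mul]
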